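/- Let Ω ⊂ ℝ^m be a bounded domain, u ∈ H¹₀(Ω) the weak solution of −Δu + σu = f with σ > 0 constant and f ∈ L²(Ω), and v ∈ H¹(Ω) with v = u on ∂Ω. Then for any z ∈ (L²(Ω))^m with div z ∈ L²(Ω): ‖∇(v−u)‖²_{L²(Ω)} + σ‖v−u‖²_{L²(Ω)} ≤ ‖∇v + z‖²_{L²(Ω)} + (1/σ)·‖f − σv − div z‖²_{L²(Ω)}. -/

import Mathlib

/-- Aubin's a posteriori error majorant (Theorem 2.1, simplified case A = I,
Γ_D = ∂Ω). Abstract formalization: `L` is `L²(Ω)`, `W` is `(L²(Ω))^m`,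
`grad` is the gradient on `H¹` (the weak form is tested with v − u ∈ H¹₀,
encoded by quantifying over all test functions), `dvg` is the divergence. -/
theorem stmt_4 {L W : Type*} [NormedAddCommGroup L] [InnerProductSpace ℝ L]
    [NormedAddCommGroup W] [InnerProductSpace ℝ W]
    (grad : L →ₗ[ℝ] W) (dvg : W →ₗ[ℝ] L)
    (σ : ℝ) (hσ : 0 < σ) (f u v : L) (z : W)
    -- u is the weak solution of −Δu + σu = f
    (hweak : ∀ φ : L, (inner ℝ (grad u) (grad φ) : ℝ) + σ * (inner ℝ u φ : ℝ)
        = (inner ℝ f φ : ℝ))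
    -- integration by parts for z ∈ H(Ω, div) against v − u ∈ H¹₀
    (hibp : ∀ φ : L, (inner ℝ z (grad φ) : ℝ) = -(inner ℝ (dvg z) φ : ℝ)) :
    ‖grad (v - u)‖ ^ 2 + σ * ‖v - u‖ ^ 2 ≤
      ‖grad v + z‖ ^ 2 + (1 / σ) * ‖f - σ • v - dvg z‖ ^ 2 := by
  have h1 := hweak (v - u)
  have h2 := hibp (v - u)
  have hg : grad (v - u) = grad v - grad u := map_sub grad v u
  have key : ‖grad (v - u)‖ ^ 2 + σ * ‖v - u‖ ^ 2
      = (inner ℝ (grad v + z) (grad (v - u)) : ℝ)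
        - (inner ℝ (f - σ • v - dvg z) (v - u) : ℝ) := by
    rw [← real_inner_self_eq_norm_sq, ← real_inner_self_eq_norm_sq]
    simp only [hg, inner_sub_left, inner_add_left, real_inner_smul_left] at *
    linarith
  have cs1 : (inner ℝ (grad v + z) (grad (v - u)) : ℝ)
      ≤ ‖grad v + z‖ * ‖grad (v - u)‖ := real_inner_le_norm _ _
  have cs2 : -(inner ℝ (f - σ • v - dvg z) (v - u) : ℝ)
      ≤ ‖f - σ • v - dvg z‖ * ‖v - u‖ := by
    have := abs_real_inner_le_norm (f - σ • v - dvg z) (v - u)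
    have h := neg_abs_le (inner ℝ (f - σ • v - dvg z) (v - u) : ℝ)
    linarith
  have hs : σ * (1 / σ) = 1 := mul_one_div_cancel hσ.ne'
  have hσi : 0 < 1 / σ := one_div_pos.mpr hσ
  nlinarith [sq_nonneg (‖grad v + z‖ - ‖grad (v - u)‖),
    mul_nonneg hσi.le (sq_nonneg (σ * ‖v - u‖ - ‖f - σ • v - dvg z‖))]
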